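/- Assume η_n → 0. Then the hard-thresholding estimator is uniformly consistent: for every ε > 0, sup_{θ∈ℝ} P_{n,θ}(|θ̂_H − θ| > ε) → 0 as n → ∞. -/

import Mathlib

open MeasureTheory ProbabilityTheory Real Filter Topology Set

noncomputable def stdGauss : Measure ℝ := gaussianReal 0 1

/-- Standard normal cdf. -/
noncomputable def Phi (x : ℝ) : ℝ := (stdGauss (Set.Iic x)).toReal

/-- Standard normal density. -/
noncomputable def phi (x : ℝ) : ℝ := gaussianPDFReal 0 1 x

/-- Hard-thresholding estimator. -/
noncomputable def hardThresh (η y : ℝ) : ℝ := if η < |y| then y else 0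

/-- Soft-thresholding (LASSO) estimator. -/
noncomputable def softThresh (η y : ℝ) : ℝ := Real.sign y * max (|y| - η) 0

/-- SCAD estimator. -/
noncomputable def scadThresh (a η y : ℝ) : ℝ :=
  if |y| ≤ 2 * η then Real.sign y * max (|y| - η) 0
  else if |y| ≤ a * η then ((a - 1) * y - Real.sign y * a * η) / (a - 2)
  else y

instance : IsProbabilityMeasure stdGauss := by unfold stdGauss; infer_instance


lemma tail_tendsto :
    Tendsto (fun m : ℕ => stdGauss {z : ℝ | (m : ℝ) < |z|}) atTop (𝓝 0) := by
  have hmeas : ∀ m : ℕ, NullMeasurableSet {z : ℝ | (m : ℝ) < |z|} stdGauss := by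
    intro m
    exact ((isOpen_lt continuous_const continuous_abs).measurableSet).nullMeasurableSet
  have hanti : Antitone (fun m : ℕ => {z : ℝ | (m : ℝ) < |z|}) := by
    intro a b hab z hz
    simp only [Set.mem_setOf_eq] at hz ⊢; exact lt_of_le_of_lt (by exact_mod_cast hab) hz
  have h := tendsto_measure_iInter_atTop (μ := stdGauss) hmeas hanti
    ⟨0, measure_ne_top _ _⟩
  have hempty : (⋂ m : ℕ, {z : ℝ | (m : ℝ) < |z|}) = ∅ := by
    ext z
    simp only [Set.mem_iInter, Set.mem_setOf_eq, Set.mem_empty_iff_false, iff_false, not_forall,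
      not_lt]
    obtain ⟨m, hm⟩ := exists_nat_ge |z|
    exact ⟨m, hm⟩
  rw [hempty] at h
  simpa [Function.comp_def] using h

lemma incl (s ηn ε : ℝ) (hs : 0 < s) (hη : 0 < ηn) (θ : ℝ) :
    {z : ℝ | ε < |hardThresh ηn (θ + z / s) - θ|} ⊆ {z : ℝ | s * (ε - ηn) < |z|} := by
  intro z hz
  simp only [Set.mem_setOf_eq] at hz ⊢
  unfold hardThresh at hz
  by_cases h : ηn < |θ + z / s|
  · rw [if_pos h] at hz
    have : |θ + z / s - θ| = |z| / s := by
      rw [add_sub_cancel_left, abs_div, abs_of_pos hs]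
    rw [this] at hz
    have h1 : s * ε < |z| := by
      rwa [lt_div_iff₀ hs, mul_comm] at hz
    nlinarith
  · rw [if_neg h] at hz
    push_neg at h
    rw [abs_sub_comm, sub_zero] at hz
    have h2 : |θ| ≤ ηn + |z| / s := by
      have : |θ| ≤ |θ + z / s| + |z / s| := by
        calc |θ| = |(θ + z / s) - z / s| := by ring_nf
        _ ≤ |θ + z / s| + |z / s| := abs_sub _ _
      rw [abs_div, abs_of_pos hs] at this
      linarith
    have : ε - ηn < |z| / s := by linarith
    rwa [lt_div_iff₀ hs, mul_comm] at this


theorem stmt_5 (η : ℕ → ℝ) (hηpos : ∀ n, 0 < η n) (hη0 : Tendsto η atTop (𝓝 0)) :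
    ∀ ε > (0 : ℝ),
      Tendsto (fun n : ℕ => ⨆ θ : ℝ,
          stdGauss {z : ℝ | ε < |hardThresh (η n) (θ + z / Real.sqrt n) - θ|})
        atTop (𝓝 0) := by
  intro ε hε
  rw [ENNReal.tendsto_nhds_zero]
  intro δ hδ
  -- choose m with tail measure ≤ δ
  obtain ⟨m, hm⟩ := (tail_tendsto.eventually_le_const hδ).exists
  -- eventually conditions on n
  have h1 : ∀ᶠ n : ℕ in atTop, η n < ε / 2 := hη0.eventually_lt_const (by linarith)
  have h2 : Tendsto (fun n : ℕ => Real.sqrt n * (ε / 2)) atTop atTop := by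
    apply Tendsto.atTop_mul_const (by linarith)
    have : Tendsto (fun x : ℝ => x ^ (1/2 : ℝ)) atTop atTop :=
      tendsto_rpow_atTop (by norm_num)
    have := this.comp (tendsto_natCast_atTop_atTop (R := ℝ))
    refine this.congr fun n => ?_
    rw [Real.sqrt_eq_rpow]; norm_num
  have h3 : ∀ᶠ n : ℕ in atTop, (m : ℝ) ≤ Real.sqrt n * (ε / 2) := h2.eventually_ge_atTop _
  have h4 : ∀ᶠ n : ℕ in atTop, 1 ≤ n := eventually_ge_atTop 1
  filter_upwards [h1, h3, h4] with n hn1 hn3 hn4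
  have hs : 0 < Real.sqrt n := Real.sqrt_pos.mpr (by exact_mod_cast hn4)
  refine le_trans (iSup_le fun θ => measure_mono (incl _ _ _ hs (hηpos n) θ)) ?_
  refine le_trans (measure_mono ?_) hm
  intro z hz
  simp only [Set.mem_setOf_eq] at hz ⊢
  have : (m : ℝ) ≤ Real.sqrt n * (ε - η n) := by
    refine le_trans hn3 ?_
    have := hs.le
    nlinarith
  linarith
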